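/- P M_c⁻¹ equals the Moore–Penrose pseudoinverse of M_o = P M P; that is, M_c⁻¹ P = P M_c⁻¹ P = (P M P)⁺. -/

import Mathlib

open Matrix

/-- The Moore–Penrose pseudoinverse conditions: `X` is the pseudoinverse of `A`. -/
def IsMoorePenroseInv {n : ℕ} (A X : Matrix (Fin n) (Fin n) ℝ) : Prop :=
  A * X * A = A ∧ X * A * X = X ∧ (A * X)ᵀ = A * X ∧ (X * A)ᵀ = X * A

theorem P_Mc_inv_eq_pseudoinverse {n : ℕ}
    (M P : Matrix (Fin n) (Fin n) ℝ) (hM : M.PosDef)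
    (hP : P * P = P) (hPt : Pᵀ = P) (ν : ℝ) (hν : 0 < ν)
    (Mc Mo : Matrix (Fin n) (Fin n) ℝ)
    (hMc : Mc = P * M * P + ν • (1 - P)) (hMo : Mo = P * M * P) :
    IsMoorePenroseInv Mo (P * Mc⁻¹) ∧
      P * Mc⁻¹ = Mc⁻¹ * P ∧ Mc⁻¹ * P = P * Mc⁻¹ * P := by
  have hMsym : Mᵀ = M := hM.1
  have hMcHerm : Mcᵀ = Mc := by
    rw [hMc]
    simp [transpose_add, transpose_mul, transpose_smul, hMsym, hPt, mul_assoc]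
  have hMcPD : Mc.PosDef := by
    refine PosDef.of_dotProduct_mulVec_pos hMcHerm (fun x hx => ?_)
    have hQ : (1 - P) * (1 - P) = (1 - P) := by
      rw [Matrix.sub_mul, Matrix.mul_sub, Matrix.mul_sub, hP]
      simp
    have hQt : (1 - P)ᵀ = 1 - P := by simp [transpose_sub, hPt]
    have hkey : dotProduct x (Mc *ᵥ x) =
        dotProduct (P *ᵥ x) (M *ᵥ (P *ᵥ x)) +
          ν * dotProduct ((1 - P) *ᵥ x) ((1 - P) *ᵥ x) := by
      rw [hMc]
      have h1 : (P * M * P) *ᵥ x = P *ᵥ (M *ᵥ (P *ᵥ x)) := by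
        simp [mulVec_mulVec, Matrix.mul_assoc]
      have h2 : dotProduct x (P *ᵥ (M *ᵥ (P *ᵥ x)))
          = dotProduct (P *ᵥ x) (M *ᵥ (P *ᵥ x)) := by
        rw [dotProduct_mulVec, ← mulVec_transpose, hPt]
      have h3 : dotProduct x ((1 - P) *ᵥ x)
          = dotProduct ((1 - P) *ᵥ x) ((1 - P) *ᵥ x) := by
        conv_lhs => rw [← hQ, ← mulVec_mulVec]
        rw [dotProduct_mulVec, ← mulVec_transpose, hQt]
      rw [add_mulVec, dotProduct_add, h1, h2, smul_mulVec, dotProduct_smul,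
        smul_eq_mul, h3]
    show 0 < dotProduct (star x) (Mc *ᵥ x)
    rw [show star x = x from rfl, hkey]
    by_cases hPx : P *ᵥ x = 0
    · have hQx : (1 - P) *ᵥ x = x := by
        rw [sub_mulVec, hPx, one_mulVec, sub_zero]
      rw [hPx, hQx]
      have : 0 < dotProduct x x := by
        simpa using (dotProduct_star_self_pos_iff (v := x)).2 hx
      simpa using mul_pos hν this
    · have h1 : 0 < dotProduct (P *ᵥ x) (M *ᵥ (P *ᵥ x)) := hM.dotProduct_mulVec_pos hPx
      have h2 : 0 ≤ dotProduct ((1 - P) *ᵥ x) ((1 - P) *ᵥ x) := by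
        simpa using dotProduct_star_self_nonneg ((1 - P) *ᵥ x)
      nlinarith
  have hdet : IsUnit Mc.det := isUnit_iff_ne_zero.mpr (ne_of_gt hMcPD.det_pos)
  have hinv : Mc * Mc⁻¹ = 1 := mul_nonsing_inv _ hdet
  have hinv' : Mc⁻¹ * Mc = 1 := nonsing_inv_mul _ hdet
  have hMcP : Mc * P = Mo := by
    rw [hMc, hMo, Matrix.add_mul, Matrix.smul_mul, Matrix.sub_mul, Matrix.one_mul,
      Matrix.mul_assoc, Matrix.mul_assoc, hP]
    simp [Matrix.mul_assoc]
  have hPMc : P * Mc = Mo := by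
    rw [hMc, hMo, Matrix.mul_add, Matrix.mul_smul, Matrix.mul_sub, Matrix.mul_one,
      ← Matrix.mul_assoc, ← Matrix.mul_assoc, hP]
    simp
  have hcomm : P * Mc⁻¹ = Mc⁻¹ * P := by
    calc P * Mc⁻¹ = Mc⁻¹ * Mc * P * Mc⁻¹ := by rw [hinv', Matrix.one_mul]
      _ = Mc⁻¹ * (Mc * P) * Mc⁻¹ := by rw [Matrix.mul_assoc Mc⁻¹ Mc P]
      _ = Mc⁻¹ * (P * Mc) * Mc⁻¹ := by rw [hMcP, hPMc]
      _ = Mc⁻¹ * P * (Mc * Mc⁻¹) := by simp only [Matrix.mul_assoc]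
      _ = Mc⁻¹ * P := by rw [hinv, Matrix.mul_one]
  have hMoP : Mo * P = Mo := by rw [hMo, Matrix.mul_assoc (P * M) P P, hP]
  have hPMo : P * Mo = Mo := by rw [hMo, ← Matrix.mul_assoc, ← Matrix.mul_assoc, hP]
  have hMoX : Mo * (P * Mc⁻¹) = P := by
    calc Mo * (P * Mc⁻¹) = Mo * P * Mc⁻¹ := by rw [Matrix.mul_assoc]
      _ = Mo * Mc⁻¹ := by rw [hMoP]
      _ = Mc * (P * Mc⁻¹) := by rw [← hMcP, Matrix.mul_assoc]
      _ = Mc * Mc⁻¹ * P := by rw [hcomm, Matrix.mul_assoc]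
      _ = P := by rw [hinv, Matrix.one_mul]
  have hXMo : (P * Mc⁻¹) * Mo = P := by
    calc (P * Mc⁻¹) * Mo = P * (Mc⁻¹ * (P * Mc)) := by rw [hPMc, Matrix.mul_assoc]
      _ = P * (P * (Mc⁻¹ * Mc)) := by
          rw [← Matrix.mul_assoc Mc⁻¹ P Mc, ← hcomm, Matrix.mul_assoc]
      _ = P := by rw [hinv', Matrix.mul_one, hP]
  refine ⟨⟨?_, ?_, ?_, ?_⟩, hcomm, ?_⟩
  · rw [hMoX, hPMo]
  · rw [hXMo, ← Matrix.mul_assoc, hP]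
  · rw [hMoX, hPt]
  · rw [hXMo, hPt]
  · rw [hcomm, Matrix.mul_assoc, hP]
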